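/- arXiv:1208.2888 — 2 statements merged into one kernel-verified Lean document; each statement's English description precedes it below -/
import Mathlib

section
/- For every θ ∈ Θ one has Γ(θ) = t_c(θ), and consequently for every t ∈ ℝ the bifurcation set satisfies S_t = {θ ∈ Θ : Γ(θ) = t}. -/
open MeasureTheory Filter Topology

/-- The general setting of the paper: a measurable base system with invertible
driving map `T`, a concave fibre function `h` (with its derivative `h'` on `[0,∞)`)
and a bounded measurable positive function `g`. -/
structure Setting (Θ : Type*) [MeasurableSpace Θ] where
  T : Θ → Θ
  Tinv : Θ → Θ
  left_inv : Function.LeftInverse Tinv T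
  right_inv : Function.RightInverse Tinv T
  T_meas : Measurable T
  Tinv_meas : Measurable Tinv
  h : ℝ → ℝ
  h' : ℝ → ℝ
  h_hasDeriv : ∀ x ∈ Set.Ici (0 : ℝ), HasDerivWithinAt h (h' x) (Set.Ici 0) x
  h'_cont : ContinuousOn h' (Set.Ici 0)
  h_strictConcave : StrictConcaveOn ℝ (Set.Ici 0) h
  h_zero : h 0 = 0
  h'_pos : ∀ x : ℝ, 0 < x → 0 < h' x
  h'_zero : h' 0 = 1
  h_sublinear : Tendsto (fun x => h x / x) atTop (𝓝 0)
  g : Θ → ℝ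
  g_pos : ∀ θ, 0 < g θ
  g_bdd : ∃ C : ℝ, ∀ θ, g θ ≤ C
  g_meas : Measurable g

namespace Setting

variable {Θ : Type*} [MeasurableSpace Θ]

/-- The fibre maps `f_t(θ,x) = e^{-t} g(θ) h(x)`. -/
noncomputable def f (S : Setting Θ) (t : ℝ) (θ : Θ) (x : ℝ) : ℝ :=
  Real.exp (-t) * S.g θ * S.h x

/-- The iterated fibre maps: `fn t 0 θ x = x` and
`fn t (n+1) θ x = f t (T^[n] θ) (fn t n θ x)`, so that `fn t 1 = f t`. -/
noncomputable def fn (S : Setting Θ) (t : ℝ) : ℕ → Θ → ℝ → ℝ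
  | 0, _, x => x
  | n + 1, θ, x => S.f t (S.T^[n] θ) (S.fn t n θ x)

/-- `ψ_{t,n}(θ) = f_t^n(T^{-n}θ, M)`. -/
noncomputable def ψ (S : Setting Θ) (t M : ℝ) (n : ℕ) (θ : Θ) : ℝ :=
  S.fn t n (S.Tinv^[n] θ) M

/-- The maximal invariant function `φ_t(θ) = inf_{n ≥ 1} ψ_{t,n}(θ)`. -/
noncomputable def φ (S : Setting Θ) (t M : ℝ) (θ : Θ) : ℝ :=
  ⨅ n : ℕ, S.ψ t M (n + 1) θ

/-- The zero set `N_t = {θ : φ_t(θ) = 0}`. -/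
noncomputable def Nset (S : Setting Θ) (t M : ℝ) : Set Θ := {θ | S.φ t M θ = 0}

/-- The critical parameter `t_c(θ) = inf {t : φ_t(θ) = 0}`. -/
noncomputable def tc (S : Setting Θ) (M : ℝ → ℝ) (θ : Θ) : ℝ :=
  sInf {t : ℝ | S.φ t (M t) θ = 0}

/-- The bifurcation set `S_t = {θ : t_c(θ) = t}`. -/
noncomputable def Sset (S : Setting Θ) (M : ℝ → ℝ) (t : ℝ) : Set Θ :=
  {θ | S.tc M θ = t}

/-- The Birkhoff average `Γ^{(n)}(θ) = (1/n) ∑_{k=1}^n log g(T^{-k}θ)`. -/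
noncomputable def Γn (S : Setting Θ) (n : ℕ) (θ : Θ) : ℝ :=
  (∑ k ∈ Finset.range n, Real.log (S.g (S.Tinv^[k + 1] θ))) / n

/-- The lower backwards Lyapunov average `Γ(θ) = liminf_n Γ^{(n)}(θ)`. -/
noncomputable def Γ (S : Setting Θ) (θ : Θ) : ℝ :=
  Filter.liminf (fun n : ℕ => S.Γn n θ) Filter.atTop

/-- The averaged exponent `γ(μ) = ∫ log g dμ`. -/
noncomputable def γfn (S : Setting Θ) (μ : Measure Θ) : ℝ :=
  ∫ θ, Real.log (S.g θ) ∂μ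

/-- The function `H(x) = log (h(x)/x)`. -/
noncomputable def Hfn (S : Setting Θ) (x : ℝ) : ℝ := Real.log (S.h x / x)

end Setting


section Aux

namespace Setting

variable {Θ : Type*} [MeasurableSpace Θ] (S : Setting Θ)

/-- Partial Birkhoff sums along the backward orbit. -/
noncomputable def P (n : ℕ) (θ : Θ) : ℝ :=
  ∑ k ∈ Finset.range n, Real.log (S.g (S.Tinv^[k + 1] θ))

lemma h_contOn : ContinuousOn S.h (Set.Ici 0) :=
  fun x hx => (S.h_hasDeriv x hx).continuousWithinAt

lemma h_strictMonoOn : StrictMonoOn S.h (Set.Ici 0) := by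
  refine strictMonoOn_of_deriv_pos (convex_Ici 0) S.h_contOn ?_
  intro x hx
  rw [interior_Ici] at hx
  rw [((S.h_hasDeriv x (Set.mem_Ici.2 (le_of_lt hx))).hasDerivAt (Ici_mem_nhds hx)).deriv]
  exact S.h'_pos x hx

lemma h_nonneg {x : ℝ} (hx : 0 ≤ x) : 0 ≤ S.h x := by
  rcases eq_or_lt_of_le hx with h | h
  · rw [← h, S.h_zero]
  · rw [← S.h_zero]
    exact (S.h_strictMonoOn Set.self_mem_Ici (Set.mem_Ici.2 h.le) h).le

lemma h_pos {x : ℝ} (hx : 0 < x) : 0 < S.h x := by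
  rw [← S.h_zero]
  exact S.h_strictMonoOn Set.self_mem_Ici (Set.mem_Ici.2 hx.le) hx

lemma h_slope_le {x y : ℝ} (hx : 0 < x) (hxy : x ≤ y) : (S.h y / y) * x ≤ S.h x := by
  have hy : 0 < y := lt_of_lt_of_le hx hxy
  have hb0 : (0:ℝ) ≤ x / y := by positivity
  have hb1 : x / y ≤ 1 := by rw [div_le_one hy]; exact hxy
  have hc := S.h_strictConcave.concaveOn.2 (Set.self_mem_Ici) (Set.mem_Ici.2 hy.le)
    (show (0:ℝ) ≤ 1 - x / y by linarith) hb0 (by ring)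
  have harg : (1 - x / y) • (0:ℝ) + (x / y) • y = x := by
    simp only [smul_eq_mul, mul_zero, zero_add]
    field_simp
  rw [harg] at hc
  simp only [smul_eq_mul, S.h_zero, mul_zero, zero_add] at hc
  calc (S.h y / y) * x = (x / y) * S.h y := by ring
    _ ≤ S.h x := hc

lemma slope_tendsto : Filter.Tendsto (fun y => S.h y / y) (𝓝[>] (0:ℝ)) (𝓝 1) := by
  have h0 := S.h_hasDeriv 0 Set.self_mem_Ici
  rw [hasDerivWithinAt_iff_tendsto_slope] at h0
  rw [S.h'_zero] at h0
  have hs : (Set.Ici (0:ℝ)) \ {0} = Set.Ioi 0 := by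
    ext x; simp [lt_iff_le_and_ne, eq_comm]
  rw [hs] at h0
  refine h0.congr' ?_
  filter_upwards [self_mem_nhdsWithin] with y hy
  rw [slope_def_field, S.h_zero, sub_zero, sub_zero]

lemma h_le_id {x : ℝ} (hx : 0 ≤ x) : S.h x ≤ x := by
  rcases eq_or_lt_of_le hx with h | h
  · rw [← h, S.h_zero]
  · have key : S.h x / x ≤ 1 := by
      refine ge_of_tendsto S.slope_tendsto ?_
      filter_upwards [Ioo_mem_nhdsGT_of_mem (Set.left_mem_Ico.2 h)] with y hy
      rw [le_div_iff₀ hy.1]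
      exact S.h_slope_le hy.1 hy.2.le
    rw [div_le_one h] at key
    exact key

lemma h_delta {ε Mt : ℝ} (hε : 0 < ε) (hM : 0 < Mt) :
    ∃ δ, 0 < δ ∧ δ ≤ Mt ∧ ∀ x, 0 ≤ x → x ≤ δ → Real.exp (-ε) * x ≤ S.h x := by
  have hlt : Real.exp (-ε) < 1 := Real.exp_lt_one_iff.2 (neg_lt_zero.2 hε)
  have ev : ∀ᶠ y in 𝓝[>] (0:ℝ), Real.exp (-ε) < S.h y / y :=
    S.slope_tendsto.eventually (eventually_gt_nhds hlt)
  obtain ⟨u, hu, hsub⟩ := mem_nhdsGT_iff_exists_Ioc_subset.1 ev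
  set δ := min u Mt with hδdef
  have hδ0 : 0 < δ := lt_min hu hM
  refine ⟨δ, hδ0, min_le_right _ _, ?_⟩
  intro x hx0 hxd
  rcases eq_or_lt_of_le hx0 with h | h
  · rw [← h, S.h_zero, mul_zero]
  · have hδu : Real.exp (-ε) < S.h δ / δ := hsub ⟨hδ0, min_le_left _ _⟩
    calc Real.exp (-ε) * x ≤ (S.h δ / δ) * x :=
          mul_le_mul_of_nonneg_right hδu.le hx0
      _ ≤ S.h x := S.h_slope_le h hxd

lemma f_nonneg (t : ℝ) (θ : Θ) {x : ℝ} (hx : 0 ≤ x) : 0 ≤ S.f t θ x :=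
  mul_nonneg (mul_nonneg (Real.exp_pos _).le (S.g_pos θ).le) (S.h_nonneg hx)

lemma fn_nonneg (t : ℝ) (n : ℕ) (θ : Θ) {x : ℝ} (hx : 0 ≤ x) : 0 ≤ S.fn t n θ x := by
  induction n with
  | zero => exact hx
  | succ n ih => exact S.f_nonneg t _ ih

lemma ψ_nonneg (t M : ℝ) (hM : 0 ≤ M) (n : ℕ) (θ : Θ) : 0 ≤ S.ψ t M n θ :=
  S.fn_nonneg t n _ hM

lemma ψ_succ (t M : ℝ) (n : ℕ) (θ : Θ) :
    S.ψ t M (n + 1) θ = S.f t (S.Tinv θ) (S.ψ t M n (S.Tinv θ)) := by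
  unfold ψ
  rw [Function.iterate_succ_apply]
  show S.f t (S.T^[n] (S.Tinv^[n] (S.Tinv θ))) _ = _
  rw [S.right_inv.iterate n (S.Tinv θ)]

lemma P_succ' (n : ℕ) (θ : Θ) :
    S.P (n + 1) θ = Real.log (S.g (S.Tinv θ)) + S.P n (S.Tinv θ) := by
  unfold P
  rw [Finset.sum_range_succ']
  simp only [Function.iterate_succ_apply, Function.iterate_zero_apply]
  ring

lemma P_succ (n : ℕ) (θ : Θ) :
    S.P (n + 1) θ = S.P n θ + Real.log (S.g (S.Tinv^[n + 1] θ)) := by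
  unfold P
  rw [Finset.sum_range_succ]

lemma psi_le (t M : ℝ) (hM : 0 < M) : ∀ (n : ℕ) (θ : Θ),
    S.ψ t M n θ ≤ Real.exp (S.P n θ - n * t) * M := by
  intro n
  induction n with
  | zero => intro θ; simp [ψ, fn, P]
  | succ n ih =>
    intro θ
    rw [S.ψ_succ, S.P_succ']
    have hy0 : 0 ≤ S.ψ t M n (S.Tinv θ) := S.ψ_nonneg t M hM.le n _
    have key : Real.exp ((Real.log (S.g (S.Tinv θ)) + S.P n (S.Tinv θ)) - (↑(n + 1) : ℝ) * t)
        = Real.exp (-t) * S.g (S.Tinv θ) * Real.exp (S.P n (S.Tinv θ) - n * t) := by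
      rw [show (Real.log (S.g (S.Tinv θ)) + S.P n (S.Tinv θ)) - (↑(n + 1) : ℝ) * t
          = (-t) + (Real.log (S.g (S.Tinv θ)) + (S.P n (S.Tinv θ) - n * t)) by push_cast; ring,
        Real.exp_add, Real.exp_add, Real.exp_log (S.g_pos _)]
      ring
    rw [key]
    have hpos : 0 ≤ Real.exp (-t) * S.g (S.Tinv θ) :=
      mul_nonneg (Real.exp_pos _).le (S.g_pos _).le
    calc S.f t (S.Tinv θ) (S.ψ t M n (S.Tinv θ))
        = Real.exp (-t) * S.g (S.Tinv θ) * S.h (S.ψ t M n (S.Tinv θ)) := rfl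
      _ ≤ Real.exp (-t) * S.g (S.Tinv θ) * S.ψ t M n (S.Tinv θ) :=
          mul_le_mul_of_nonneg_left (S.h_le_id hy0) hpos
      _ ≤ Real.exp (-t) * S.g (S.Tinv θ) * (Real.exp (S.P n (S.Tinv θ) - n * t) * M) :=
          mul_le_mul_of_nonneg_left (ih _) hpos
      _ = Real.exp (-t) * S.g (S.Tinv θ) * Real.exp (S.P n (S.Tinv θ) - n * t) * M := by ring

end Setting

end Aux

section Aux2
namespace Setting
variable {Θ : Type*} [MeasurableSpace Θ] (S : Setting Θ)

lemma phi_eq_zero (t M ε : ℝ) (hM : 0 < M) (hε : 0 < ε) (θ : Θ)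
    (hfreq : ∀ N : ℕ, ∃ n, N ≤ n ∧ 1 ≤ n ∧ S.P n θ - n * t ≤ -(n:ℝ) * ε) :
    S.φ t M θ = 0 := by
  have hub : ∀ n : ℕ, 0 ≤ S.ψ t M (n + 1) θ := fun n => S.ψ_nonneg t M hM.le _ _
  have hbdd : BddBelow (Set.range fun n : ℕ => S.ψ t M (n + 1) θ) :=
    ⟨0, by rintro _ ⟨n, rfl⟩; exact hub n⟩
  have h0 : 0 ≤ S.φ t M θ := le_ciInf hub
  refine le_antisymm ?_ h0
  have : ∀ c > 0, S.φ t M θ ≤ 0 + c := by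
    intro c hc
    obtain ⟨N, hN⟩ := exists_nat_ge (Real.log (M / c) / ε)
    obtain ⟨n, hNn, hn1, hP⟩ := hfreq N
    have hφψ : S.φ t M θ ≤ S.ψ t M n θ := by
      have := ciInf_le hbdd (n - 1)
      rwa [Nat.sub_add_cancel hn1] at this
    have hψ : S.ψ t M n θ ≤ Real.exp (-(n:ℝ) * ε) * M := by
      calc S.ψ t M n θ ≤ Real.exp (S.P n θ - n * t) * M := S.psi_le t M hM n θ
        _ ≤ _ := mul_le_mul_of_nonneg_right (Real.exp_le_exp.2 hP) hM.le
    have hlog : Real.log (M / c) ≤ (n:ℝ) * ε := by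
      have h1 : Real.log (M / c) ≤ (N:ℝ) * ε := by
        rw [div_le_iff₀ hε] at hN
        exact hN
      have h2 : (N:ℝ) * ε ≤ (n:ℝ) * ε :=
        mul_le_mul_of_nonneg_right (Nat.cast_le.2 hNn) hε.le
      linarith
    have hexp : Real.exp (-(n:ℝ) * ε) ≤ c / M := by
      rw [← Real.le_log_iff_exp_le (by positivity)]
      rw [Real.log_div (ne_of_gt hc) (ne_of_gt hM)]
      rw [Real.log_div (ne_of_gt hM) (ne_of_gt hc)] at hlog
      linarith
    have : Real.exp (-(n:ℝ) * ε) * M ≤ c := by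
      calc Real.exp (-(n:ℝ) * ε) * M ≤ (c / M) * M := mul_le_mul_of_nonneg_right hexp hM.le
        _ = c := by field_simp
    linarith
  exact le_of_forall_pos_le_add this

lemma phi_pos (t M ε B : ℝ) (hM : 0 < M) (hε : 0 < ε) (hB : B ≤ 0) (θ : Θ)
    (hq : ∀ n : ℕ, 1 ≤ n → 2 * ε * n + B ≤ S.P n θ - n * t) :
    0 < S.φ t M θ := by
  obtain ⟨δ, hδ0, hδM, hδ⟩ := S.h_delta hε hM
  have hhδ : 0 < S.h δ := S.h_pos hδ0
  set K : ℕ → ℝ := fun k => S.h δ * Real.exp (2 * ε * k + 2 * ε + B - (S.P k θ - k * t))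
    with hK
  have hKk : ∀ j : ℕ, K j = S.h δ * Real.exp (2 * ε * j + 2 * ε + B - (S.P j θ - j * t)) :=
    fun j => by simp only [hK]
  have hKpos : ∀ k, 0 < K k := fun k => mul_pos hhδ (Real.exp_pos _)
  have claim : ∀ (m k : ℕ), min δ (K k) ≤ S.ψ t M m (S.Tinv^[k] θ) := by
    intro m
    induction m with
    | zero =>
      intro k
      calc min δ (K k) ≤ δ := min_le_left _ _
        _ ≤ M := hδM
        _ = S.ψ t M 0 (S.Tinv^[k] θ) := rfl
    | succ m ih =>
      intro k
      have hrec : S.ψ t M (m + 1) (S.Tinv^[k] θ)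
          = S.f t (S.Tinv^[k + 1] θ) (S.ψ t M m (S.Tinv^[k + 1] θ)) := by
        rw [S.ψ_succ, ← Function.iterate_succ_apply' S.Tinv k θ]
      rw [hrec]
      set u := S.ψ t M m (S.Tinv^[k + 1] θ) with hu
      have hu0 : 0 ≤ u := S.ψ_nonneg t M hM.le _ _
      have hiu : min δ (K (k + 1)) ≤ u := ih (k + 1)
      have hfac : Real.exp (-t) * S.g (S.Tinv^[k + 1] θ)
          = Real.exp ((S.P (k + 1) θ - (↑(k + 1) : ℝ) * t) - (S.P k θ - k * t)) := by
        rw [show (S.P (k + 1) θ - (↑(k + 1) : ℝ) * t) - (S.P k θ - k * t)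
            = (-t) + (S.P (k + 1) θ - S.P k θ) by push_cast; ring,
          Real.exp_add, S.P_succ,
          show S.P k θ + Real.log (S.g (S.Tinv^[k + 1] θ)) - S.P k θ
            = Real.log (S.g (S.Tinv^[k + 1] θ)) by ring,
          Real.exp_log (S.g_pos _)]
      have hfΔ : S.f t (S.Tinv^[k + 1] θ) u
          = Real.exp ((S.P (k + 1) θ - (↑(k + 1) : ℝ) * t) - (S.P k θ - k * t)) * S.h u := by
        rw [← hfac]; rfl
      have hq1 : 2 * ε * (↑(k + 1) : ℝ) + B ≤ S.P (k + 1) θ - (↑(k + 1) : ℝ) * t :=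
        hq (k + 1) (Nat.le_add_left 1 k)
      rcases le_or_gt δ u with hcase | hcase
      · -- u ≥ δ
        have h1 : S.h δ ≤ S.h u :=
          S.h_strictMonoOn.monotoneOn (Set.mem_Ici.2 hδ0.le) (Set.mem_Ici.2 hu0) hcase
        calc min δ (K k) ≤ K k := min_le_right _ _
          _ ≤ Real.exp ((S.P (k + 1) θ - (↑(k + 1) : ℝ) * t) - (S.P k θ - k * t)) * S.h δ := by
              rw [hKk k, mul_comm (S.h δ)]
              refine mul_le_mul_of_nonneg_right (Real.exp_le_exp.2 ?_) hhδ.le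
              push_cast at hq1 ⊢
              linarith
          _ ≤ S.f t (S.Tinv^[k + 1] θ) u := by
              rw [hfΔ]
              exact mul_le_mul_of_nonneg_left h1 (Real.exp_pos _).le
      · -- u < δ
        have hKu : K (k + 1) ≤ u := by
          rcases le_total δ (K (k + 1)) with hmm | hmm
          · exfalso; rw [min_eq_left hmm] at hiu; linarith
          · rwa [min_eq_right hmm] at hiu
        have hupos : 0 < u := lt_of_lt_of_le (hKpos (k + 1)) hKu
        have h2 : Real.exp (-ε) * u ≤ S.h u := hδ u hu0 hcase.le
        have hstep : Real.exp ((S.P (k + 1) θ - (↑(k + 1) : ℝ) * t) - (S.P k θ - k * t))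
              * (Real.exp (-ε) * K (k + 1))
            = S.h δ * Real.exp (((S.P (k + 1) θ - (↑(k + 1) : ℝ) * t) - (S.P k θ - k * t))
              + (-ε) + (2 * ε * (↑(k + 1) : ℝ) + 2 * ε + B - (S.P (k + 1) θ - (↑(k + 1) : ℝ) * t))) := by
          rw [hKk (k + 1), Real.exp_add, Real.exp_add]
          push_cast
          ring
        calc min δ (K k) ≤ K k := min_le_right _ _
          _ ≤ Real.exp ((S.P (k + 1) θ - (↑(k + 1) : ℝ) * t) - (S.P k θ - k * t))
              * (Real.exp (-ε) * K (k + 1)) := by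
              rw [hstep, hKk k]
              refine mul_le_mul_of_nonneg_left (Real.exp_le_exp.2 ?_) hhδ.le
              push_cast
              linarith
          _ ≤ Real.exp ((S.P (k + 1) θ - (↑(k + 1) : ℝ) * t) - (S.P k θ - k * t))
              * (Real.exp (-ε) * u) := by
              refine mul_le_mul_of_nonneg_left ?_ (Real.exp_pos _).le
              exact mul_le_mul_of_nonneg_left hKu (Real.exp_pos _).le
          _ ≤ S.f t (S.Tinv^[k + 1] θ) u := by
              rw [hfΔ]
              exact mul_le_mul_of_nonneg_left h2 (Real.exp_pos _).le
    
  have hfin : ∀ n : ℕ, min δ (K 0) ≤ S.ψ t M (n + 1) θ := by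
    intro n
    have := claim (n + 1) 0
    simpa using this
  have : min δ (K 0) ≤ S.φ t M θ := le_ciInf hfin
  exact lt_of_lt_of_le (lt_min hδ0 (hKpos 0)) this

end Setting
end Aux2

section Main

namespace Setting

lemma exists_head_bound (v : ℕ → ℝ) : ∀ N : ℕ, ∃ B : ℝ, B ≤ 0 ∧ ∀ n, n < N → B ≤ v n := by
  intro N
  induction N with
  | zero => exact ⟨0, le_rfl, fun n hn => absurd hn (Nat.not_lt_zero n)⟩
  | succ N ih =>
    obtain ⟨B, hB0, hB⟩ := ih
    refine ⟨min B (min 0 (v N)), le_trans (min_le_left _ _) hB0, ?_⟩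
    intro n hn
    rcases Nat.lt_succ_iff_lt_or_eq.1 hn with h | h
    · exact le_trans (min_le_left _ _) (hB n h)
    · subst h; exact le_trans (min_le_right _ _) (min_le_right _ _)

end Setting

end Main

/-- `Γ(θ) = t_c(θ)` for every `θ`, and `S_t = {θ : Γ(θ) = t}` for every `t`. -/
theorem stmt6 {Θ : Type*} [MeasurableSpace Θ] (S : Setting Θ) (M : ℝ → ℝ)
    (hM : ∀ t, 0 < M t) (hMf : ∀ t θ, S.f t θ (M t) < M t) :
    (∀ θ : Θ, S.Γ θ = S.tc M θ) ∧
    (∀ t : ℝ, S.Sset M t = {θ : Θ | S.Γ θ = t}) := by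
  obtain ⟨C, hC⟩ := S.g_bdd
  have main : ∀ θ : Θ, S.Γ θ = S.tc M θ := by
    intro θ
    have hC0 : 0 < C := lt_of_lt_of_le (S.g_pos θ) (hC θ)
    have hPΓ : ∀ n : ℕ, 1 ≤ n → S.P n θ = n * S.Γn n θ := by
      intro n hn
      have hn0 : (n:ℝ) ≠ 0 := Nat.cast_ne_zero.2 (by omega)
      unfold Setting.Γn Setting.P
      field_simp
    have hΓn_le : ∀ n : ℕ, 1 ≤ n → S.Γn n θ ≤ Real.log C := by
      intro n hn
      have hn0 : (0:ℝ) < n := by exact_mod_cast Nat.pos_of_ne_zero (by omega)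
      unfold Setting.Γn
      rw [div_le_iff₀ hn0]
      calc (∑ k ∈ Finset.range n, Real.log (S.g (S.Tinv^[k+1] θ)))
          ≤ ∑ _k ∈ Finset.range n, Real.log C :=
            Finset.sum_le_sum fun k _ => Real.log_le_log (S.g_pos _) (hC _)
        _ = Real.log C * n := by
            rw [Finset.sum_const, Finset.card_range, nsmul_eq_mul]; ring
    set A := {a : ℝ | ∀ᶠ n : ℕ in Filter.atTop, a ≤ S.Γn n θ} with hA
    have hΓA : S.Γ θ = sSup A := Filter.liminf_eq
    have freq_of_not_mem : ∀ b : ℝ, b ∉ A →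
        ∀ N : ℕ, ∃ n, N ≤ n ∧ 1 ≤ n ∧ S.Γn n θ < b := by
      intro b hb N
      rw [hA, Set.mem_setOf_eq, Filter.not_eventually] at hb
      obtain ⟨n, hnb, hge⟩ :=
        (hb.and_eventually (Filter.eventually_ge_atTop (max N 1))).exists
      exact ⟨n, le_trans (le_max_left _ _) hge, le_trans (le_max_right _ _) hge,
        not_le.1 hnb⟩
    have lemA : ∀ t' ε : ℝ, 0 < ε →
        (∀ N : ℕ, ∃ n, N ≤ n ∧ 1 ≤ n ∧ S.Γn n θ < t' - ε) →
        S.φ t' (M t') θ = 0 := by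
      intro t' ε hε hfr
      refine S.phi_eq_zero t' (M t') ε (hM t') hε θ ?_
      intro N
      obtain ⟨n, hNn, h1n, hlt⟩ := hfr N
      refine ⟨n, hNn, h1n, ?_⟩
      have hn0 : (0:ℝ) < n := by exact_mod_cast Nat.pos_of_ne_zero (by omega)
      rw [hPΓ n h1n]
      have h1 : (n:ℝ) * S.Γn n θ ≤ (n:ℝ) * (t' - ε) :=
        mul_le_mul_of_nonneg_left hlt.le hn0.le
      have h2 : (n:ℝ) * (t' - ε) = n * t' - n * ε := by ring
      linarith
    rcases Set.eq_empty_or_nonempty A with hAe | hAne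
    · have hΓ0 : S.Γ θ = 0 := by rw [hΓA, hAe, Real.sSup_empty]
      have hall : ∀ t' : ℝ, S.φ t' (M t') θ = 0 := by
        intro t'
        refine lemA t' 1 one_pos (freq_of_not_mem (t' - 1) ?_)
        rw [hAe]; exact Set.notMem_empty _
      have htc : S.tc M θ = 0 := by
        unfold Setting.tc
        rw [Set.eq_univ_of_forall hall]
        refine Real.sInf_of_not_bddBelow ?_
        rintro ⟨b, hb⟩
        have := hb (Set.mem_univ (b - 1))
        linarith
      rw [hΓ0, htc]
    · have hbddA : BddAbove A := by
        refine ⟨Real.log C, fun a ha => ?_⟩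
        obtain ⟨n, h1, h2⟩ := (Filter.Eventually.and ha
          (Filter.eventually_ge_atTop 1)).exists
        exact le_trans h1 (hΓn_le n h2)
      set L := sSup A with hL
      have hD2 : ∀ t', L < t' → S.φ t' (M t') θ = 0 := by
        intro t' ht'
        set ε := (t' - L) / 2 with hεdef
        have hε0 : 0 < ε := div_pos (by linarith) two_pos
        refine lemA t' ε hε0 (freq_of_not_mem (t' - ε) ?_)
        intro hmem
        have hle : t' - ε ≤ L := le_csSup hbddA hmem
        have : L < t' - ε := by rw [hεdef]; linarith
        linarith
      have hD1 : ∀ t', t' < L → S.φ t' (M t') θ ≠ 0 := by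
        intro t' ht'
        obtain ⟨a, haA, hta⟩ := exists_lt_of_lt_csSup hAne ht'
        set ε := (a - t') / 2 with hεdef
        have hε0 : 0 < ε := div_pos (by linarith) two_pos
        obtain ⟨N, hN⟩ := Filter.eventually_atTop.1 haA
        obtain ⟨B, hB0, hB⟩ := Setting.exists_head_bound
          (fun n : ℕ => (S.P n θ - n * t') - 2 * ε * n) N
        have hq : ∀ n : ℕ, 1 ≤ n → 2 * ε * n + B ≤ S.P n θ - n * t' := by
          intro n h1n
          have hn0 : (0:ℝ) < n := by exact_mod_cast Nat.pos_of_ne_zero (by omega)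
          rcases lt_or_ge n N with h | h
          · have hthis : B ≤ (S.P n θ - n * t') - 2 * ε * n := hB n h
            linarith
          · have hΓge : a ≤ S.Γn n θ := hN n h
            have h1 : (n:ℝ) * a ≤ (n:ℝ) * S.Γn n θ :=
              mul_le_mul_of_nonneg_left hΓge hn0.le
            rw [← hPΓ n h1n] at h1
            have ha2 : (n:ℝ) * a = n * t' + 2 * ε * n := by rw [hεdef]; ring
            linarith
        exact ne_of_gt (S.phi_pos t' (M t') ε B (hM t') hε0 hB0 θ hq)
      have hDne : (L + 1) ∈ {t : ℝ | S.φ t (M t) θ = 0} := hD2 (L + 1) (by linarith)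
      have hlb : ∀ b ∈ {t : ℝ | S.φ t (M t) θ = 0}, L ≤ b := by
        intro b hb
        by_contra hcon
        push_neg at hcon
        exact hD1 b hcon hb
      have h1 : L ≤ S.tc M θ := le_csInf ⟨L + 1, hDne⟩ hlb
      have h2 : S.tc M θ ≤ L := by
        refine le_of_forall_pos_le_add ?_
        intro c hc
        exact csInf_le ⟨L, hlb⟩ (hD2 (L + c) (by linarith))
      rw [hΓA]
      linarith
  refine ⟨main, ?_⟩
  intro t
  ext θ
  simp only [Setting.Sset, Set.mem_setOf_eq]
  rw [← main θ]
end

section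
/- Assume in addition that inf_Θ g > 0 (so that log g is bounded). Let t ∈ ℝ and let μ be a T-invariant probability measure on (Θ, 𝓑). If μ(N_t) = 1, then γ(μ) ≤ t. -/
open MeasureTheory Filter Topology

section AuxH

variable {Θ : Type*} [MeasurableSpace Θ] (S : Setting Θ)

lemma aux_h_contOn : ContinuousOn S.h (Set.Ici 0) :=
  fun x hx => (S.h_hasDeriv x hx).continuousWithinAt

lemma aux_h_mono : StrictMonoOn S.h (Set.Ici 0) := by
  apply strictMonoOn_of_hasDerivWithinAt_pos (convex_Ici 0) (aux_h_contOn S)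
    (f' := S.h')
  · intro x hx
    rw [interior_Ici] at hx ⊢
    exact (S.h_hasDeriv x (Set.mem_Ici.2 (le_of_lt hx))).mono Set.Ioi_subset_Ici_self
  · intro x hx
    rw [interior_Ici] at hx
    exact S.h'_pos x hx

lemma aux_h_pos {x : ℝ} (hx : 0 < x) : 0 < S.h x := by
  have := aux_h_mono S (Set.self_mem_Ici) (Set.mem_Ici.2 hx.le) hx
  rwa [S.h_zero] at this

lemma aux_slope {x y : ℝ} (hy : 0 < y) (hyx : y ≤ x) :
    (y / x) * S.h x ≤ S.h y := by
  rcases eq_or_lt_of_le hyx with rfl | hyx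
  · rw [div_self hy.ne']; simp
  have hx : 0 < x := hy.trans hyx
  have hb : (0:ℝ) ≤ y / x := by positivity
  have ha : (0:ℝ) ≤ 1 - y / x := by
    rw [sub_nonneg, div_le_one hx]; exact hyx.le
  have := S.h_strictConcave.concaveOn.2 (Set.self_mem_Ici)
    (Set.mem_Ici.2 hx.le) ha hb (by ring)
  rw [smul_eq_mul, smul_eq_mul, smul_eq_mul, smul_eq_mul, mul_zero, zero_add,
    S.h_zero, mul_zero, zero_add, div_mul_cancel₀ _ hx.ne'] at this
  exact this

lemma aux_ratio_tendsto : Tendsto (fun y => S.h y / y) (𝓝[>] 0) (𝓝 1) := by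
  have h1 := hasDerivWithinAt_iff_tendsto_slope.1 (S.h_hasDeriv 0 Set.self_mem_Ici)
  rw [S.h'_zero] at h1
  have hset : (Set.Ici (0:ℝ)) \ {0} = Set.Ioi 0 := by
    ext z
    simp only [Set.mem_diff, Set.mem_Ici, Set.mem_singleton_iff, Set.mem_Ioi]
    constructor
    · rintro ⟨hz, hz0⟩; exact lt_of_le_of_ne hz (Ne.symm hz0)
    · intro hz; exact ⟨hz.le, hz.ne'⟩
  rw [hset] at h1
  have heq : slope S.h 0 = fun y => S.h y / y := by
    funext y
    rw [slope_def_field, S.h_zero, sub_zero, sub_zero]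
  rwa [heq] at h1

lemma aux_h_le {x : ℝ} (hx : 0 < x) : S.h x ≤ x := by
  have hev : ∀ᶠ y in 𝓝[>] (0:ℝ), S.h x / x ≤ S.h y / y := by
    filter_upwards [Ioo_mem_nhdsGT_of_mem (Set.left_mem_Ico.2 hx)] with y hy
    have h1 := aux_slope S hy.1 hy.2.le
    rw [div_le_div_iff₀ hx hy.1]
    have h3 := mul_le_mul_of_nonneg_right h1 hx.le
    rw [div_mul_eq_mul_div, div_mul_cancel₀ _ hx.ne'] at h3
    linarith
  have hle : S.h x / x ≤ 1 := ge_of_tendsto (aux_ratio_tendsto S) hev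
  calc S.h x = (S.h x / x) * x := by field_simp
    _ ≤ 1 * x := mul_le_mul_of_nonneg_right hle hx.le
    _ = x := one_mul x

end AuxH
section AuxPsi

variable {Θ : Type*} [MeasurableSpace Θ] (S : Setting Θ) {t M : ℝ}

lemma aux_f_pos (θ : Θ) {x : ℝ} (hx : 0 < x) : 0 < S.f t θ x := by
  unfold Setting.f
  have h1 := aux_h_pos S hx
  have h2 := S.g_pos θ
  positivity

lemma aux_f_mono (θ : Θ) {x y : ℝ} (hx : 0 ≤ x) (hxy : x ≤ y) :
    S.f t θ x ≤ S.f t θ y := by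
  unfold Setting.f
  have hg := (S.g_pos θ).le
  have := (aux_h_mono S).monotoneOn (Set.mem_Ici.2 hx) (Set.mem_Ici.2 (hx.trans hxy)) hxy
  have he : (0:ℝ) ≤ Real.exp (-t) * S.g θ := by positivity
  exact mul_le_mul_of_nonneg_left this he

lemma aux_f_lt (hMf : ∀ θ, S.f t θ M < M) (θ : Θ) {x : ℝ} (hx : 0 ≤ x) (hxM : x ≤ M) :
    S.f t θ x < M :=
  lt_of_le_of_lt (aux_f_mono S θ hx hxM) (hMf θ)

lemma aux_fn_mem (hMf : ∀ θ, S.f t θ M < M) :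
    ∀ (n : ℕ) (θ : Θ) {x : ℝ}, 0 < x → x ≤ M →
      0 < S.fn t n θ x ∧ S.fn t n θ x ≤ M := by
  intro n
  induction n with
  | zero => intro θ x hx hxM; exact ⟨hx, hxM⟩
  | succ n ih =>
    intro θ x hx hxM
    obtain ⟨h1, h2⟩ := ih θ hx hxM
    exact ⟨aux_f_pos S _ h1, (aux_f_lt S hMf _ h1.le h2).le⟩

lemma aux_fn_mono (hMf : ∀ θ, S.f t θ M < M) :
    ∀ (n : ℕ) (θ : Θ) {x y : ℝ}, 0 < x → x ≤ y → y ≤ M →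
      S.fn t n θ x ≤ S.fn t n θ y := by
  intro n
  induction n with
  | zero => intro θ x y _ hxy _; exact hxy
  | succ n ih =>
    intro θ x y hx hxy hyM
    have hx' := (aux_fn_mem S hMf n θ hx (hxy.trans hyM)).1
    exact aux_f_mono S _ hx'.le (ih θ hx hxy hyM)

lemma aux_fn_comm : ∀ (n : ℕ) (θ : Θ) (x : ℝ),
    S.fn t (n + 1) θ x = S.fn t n (S.T θ) (S.f t θ x) := by
  intro n
  induction n with
  | zero => intro θ _x; simp [Setting.fn]
  | succ n ih =>
    intro θ x
    show S.f t (S.T^[n+1] θ) (S.fn t (n+1) θ x) = S.f t (S.T^[n] (S.T θ)) (S.fn t n (S.T θ) (S.f t θ x))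
    rw [ih θ x, Function.iterate_succ_apply]

lemma aux_psi_rec (n : ℕ) (θ : Θ) :
    S.ψ t M (n + 1) θ = S.f t (S.Tinv θ) (S.ψ t M n (S.Tinv θ)) := by
  show S.f t (S.T^[n] (S.Tinv^[n+1] θ)) (S.fn t n (S.Tinv^[n+1] θ) M) = _
  rw [Function.iterate_succ_apply, (S.right_inv.iterate n) (S.Tinv θ)]
  rfl

lemma aux_psi_mem (hM : 0 < M) (hMf : ∀ θ, S.f t θ M < M) (n : ℕ) (θ : Θ) :
    0 < S.ψ t M n θ ∧ S.ψ t M n θ ≤ M :=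
  aux_fn_mem S hMf n _ hM le_rfl

lemma aux_psi_antitone (hM : 0 < M) (hMf : ∀ θ, S.f t θ M < M) (θ : Θ) :
    Antitone (fun n => S.ψ t M n θ) := by
  apply antitone_nat_of_succ_le
  intro n
  show S.ψ t M (n+1) θ ≤ S.ψ t M n θ
  have e1 : S.ψ t M (n+1) θ = S.fn t n (S.Tinv^[n] θ) (S.f t (S.Tinv^[n+1] θ) M) := by
    show S.fn t (n+1) (S.Tinv^[n+1] θ) M = _
    rw [aux_fn_comm]
    congr 1
    rw [Function.iterate_succ_apply']
    exact S.right_inv _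
  rw [e1]
  exact aux_fn_mono S hMf n _ (aux_f_pos S _ hM)
    (aux_f_lt S hMf _ hM.le le_rfl).le le_rfl

lemma aux_hext_cont : Continuous (fun x : ℝ => S.h (max x 0)) :=
  (aux_h_contOn S).comp_continuous (continuous_id.max continuous_const)
    (fun x => Set.mem_Ici.2 (le_max_right _ _))

lemma aux_psi_meas (hM : 0 < M) (hMf : ∀ θ, S.f t θ M < M) :
    ∀ n : ℕ, Measurable (S.ψ t M n) := by
  intro n
  induction n with
  | zero =>
    have : S.ψ t M 0 = fun _ => M := rfl
    rw [this]; exact measurable_const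
  | succ n ih =>
    have he : S.ψ t M (n+1) = fun θ =>
        Real.exp (-t) * S.g (S.Tinv θ) * S.h (max (S.ψ t M n (S.Tinv θ)) 0) := by
      funext θ
      rw [aux_psi_rec, max_eq_left (aux_psi_mem S hM hMf n _).1.le]
      rfl
    rw [he]
    exact (measurable_const.mul (S.g_meas.comp S.Tinv_meas)).mul
      ((aux_hext_cont S).measurable.comp (ih.comp S.Tinv_meas))

end AuxPsi
/-- assuming `inf g > 0`, for a `T`-invariant probability measure `μ`:
if `μ(N_t) = 1` then `γ(μ) ≤ t`. -/
theorem stmt11 {Θ : Type*} [MeasurableSpace Θ] (S : Setting Θ)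
    (hg : ∃ c : ℝ, 0 < c ∧ ∀ θ, c ≤ S.g θ)
    (t M : ℝ) (hM : 0 < M) (hMf : ∀ θ, S.f t θ M < M)
    (μ : Measure Θ) [IsProbabilityMeasure μ] (hμ : MeasurePreserving S.T μ μ)
    (hN : μ (S.Nset t M) = 1) :
    S.γfn μ ≤ t := by
  classical
  obtain ⟨c, hc, hcg⟩ := hg
  obtain ⟨C, hC⟩ := S.g_bdd
  have hhM : 0 < S.h M := aux_h_pos S hM
  set r : ℝ := Real.exp (-t) * c * (S.h M / M) with hr
  have hrpos : 0 < r := by positivity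
  have hψbounds := aux_psi_mem S hM hMf
  have hψmeas := aux_psi_meas S hM hMf
  -- slope bounds
  have hslopeM : ∀ {x : ℝ}, 0 < x → x ≤ M → (S.h M / M) * x ≤ S.h x := by
    intro x hx hxM
    calc (S.h M / M) * x = (x / M) * S.h M := by ring
    _ ≤ S.h x := aux_slope S hx hxM
  have hratio_le : ∀ {x : ℝ}, 0 < x → x ≤ M →
      S.h M / M ≤ S.h x / x ∧ S.h x / x ≤ 1 := by
    intro x hx hxM
    constructor
    · rw [div_le_div_iff₀ hM hx]
      have h1 := mul_le_mul_of_nonneg_right (hslopeM hx hxM) (le_of_lt hM)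
      calc S.h M * x = ((S.h M / M) * x) * M := by field_simp
      _ ≤ S.h x * M := h1
    · rw [div_le_one hx]; exact aux_h_le S hx
  have hmM1 : S.h M / M ≤ 1 := by rw [div_le_one hM]; exact aux_h_le S hM
  -- lower bound on ψ
  have hψlb : ∀ (n : ℕ) (θ : Θ), r ^ n * M ≤ S.ψ t M n θ := by
    intro n
    induction n with
    | zero => intro θ; simp only [pow_zero, one_mul]; exact le_of_eq rfl
    | succ n ih =>
      intro θ
      rw [aux_psi_rec]
      have hx := hψbounds n (S.Tinv θ)
      have h1 : (S.h M / M) * (r ^ n * M) ≤ S.h (S.ψ t M n (S.Tinv θ)) :=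
        le_trans (mul_le_mul_of_nonneg_left (ih _) (by positivity))
          (hslopeM hx.1 hx.2)
      have h2 : Real.exp (-t) * c ≤ Real.exp (-t) * S.g (S.Tinv θ) :=
        mul_le_mul_of_nonneg_left (hcg _) (Real.exp_nonneg _)
      have h3 : (Real.exp (-t) * c) * ((S.h M / M) * (r ^ n * M)) ≤
          (Real.exp (-t) * S.g (S.Tinv θ)) * S.h (S.ψ t M n (S.Tinv θ)) :=
        mul_le_mul h2 h1 (mul_nonneg (by positivity) (mul_nonneg (pow_nonneg hrpos.le n) hM.le))
          (mul_nonneg (Real.exp_nonneg _) (S.g_pos _).le)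
      calc r ^ (n + 1) * M
          = (Real.exp (-t) * c) * ((S.h M / M) * (r ^ n * M)) := by rw [hr]; ring
      _ ≤ (Real.exp (-t) * S.g (S.Tinv θ)) * S.h (S.ψ t M n (S.Tinv θ)) := h3
      _ = S.f t (S.Tinv θ) (S.ψ t M n (S.Tinv θ)) := by
          simp only [Setting.f]
  -- measurability
  have hhψmeas : ∀ n, Measurable fun θ => S.h (S.ψ t M n θ) := by
    intro n
    have he : (fun θ => S.h (S.ψ t M n θ)) = fun θ => S.h (max (S.ψ t M n θ) 0) := by
      funext θ; rw [max_eq_left (hψbounds n θ).1.le]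
    rw [he]
    exact (aux_hext_cont S).measurable.comp (hψmeas n)
  have hlogmeas : ∀ n, Measurable fun θ => Real.log (S.ψ t M n θ) :=
    fun n => Real.measurable_log.comp (hψmeas n)
  have hHmeas : ∀ n, Measurable fun θ => Real.log (S.h (S.ψ t M n θ) / S.ψ t M n θ) :=
    fun n => Real.measurable_log.comp ((hhψmeas n).div (hψmeas n))
  -- integrability helper
  have hint : ∀ (f : Θ → ℝ) (K : ℝ), Measurable f → (∀ θ, |f θ| ≤ K) →
      Integrable f μ := by
    intro f K hfm hfb
    refine ⟨hfm.aestronglyMeasurable,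
      HasFiniteIntegral.of_bounded (C := K) (ae_of_all _ ?_)⟩
    intro θ; rw [Real.norm_eq_abs]; exact hfb θ
  have hintlog : ∀ n, Integrable (fun θ => Real.log (S.ψ t M n θ)) μ := by
    intro n
    apply hint _ (|Real.log (r ^ n * M)| + |Real.log M|) (hlogmeas n)
    intro θ
    have h1 : Real.log (r ^ n * M) ≤ Real.log (S.ψ t M n θ) :=
      Real.log_le_log (mul_pos (pow_pos hrpos n) hM) (hψlb n θ)
    have h2 : Real.log (S.ψ t M n θ) ≤ Real.log M :=
      Real.log_le_log (hψbounds n θ).1 (hψbounds n θ).2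
    have h3 := neg_abs_le (Real.log (r ^ n * M))
    have h4 := le_abs_self (Real.log M)
    have h5 := abs_nonneg (Real.log (r ^ n * M))
    have h6 := abs_nonneg (Real.log M)
    rw [abs_le]; constructor <;> linarith
  set K : ℝ := |Real.log (S.h M / M)| with hK
  have hHbound : ∀ n θ, |Real.log (S.h (S.ψ t M n θ) / S.ψ t M n θ)| ≤ K := by
    intro n θ
    obtain ⟨hx1, hx2⟩ := hψbounds n θ
    obtain ⟨hl, hu⟩ := hratio_le hx1 hx2
    have hpos : 0 < S.h M / M := by positivity
    have l1 : Real.log (S.h M / M) ≤ Real.log (S.h (S.ψ t M n θ) / S.ψ t M n θ) :=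
      Real.log_le_log hpos hl
    have l2 : Real.log (S.h (S.ψ t M n θ) / S.ψ t M n θ) ≤ 0 :=
      Real.log_nonpos (le_trans hpos.le hl) hu
    have l3 := neg_abs_le (Real.log (S.h M / M))
    have l4 := abs_nonneg (Real.log (S.h M / M))
    rw [abs_le]; constructor <;> linarith
  have hintH : ∀ n, Integrable
      (fun θ => Real.log (S.h (S.ψ t M n θ) / S.ψ t M n θ)) μ :=
    fun n => hint _ K (hHmeas n) (hHbound n)
  have hlogg_meas : Measurable fun θ => Real.log (S.g θ) :=
    Real.measurable_log.comp S.g_meas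
  have hintg : Integrable (fun θ => Real.log (S.g θ)) μ := by
    apply hint _ (|Real.log c| + |Real.log C|) hlogg_meas
    intro θ
    have h1 : Real.log c ≤ Real.log (S.g θ) := Real.log_le_log hc (hcg θ)
    have h2 : Real.log (S.g θ) ≤ Real.log C := Real.log_le_log (S.g_pos θ) (hC θ)
    have h3 := neg_abs_le (Real.log c)
    have h4 := le_abs_self (Real.log C)
    have h5 := abs_nonneg (Real.log c)
    have h6 := abs_nonneg (Real.log C)
    rw [abs_le]; constructor <;> linarith
  -- change of variables
  let e : Θ ≃ᵐ Θ :=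
    ⟨⟨S.T, S.Tinv, S.left_inv, S.right_inv⟩, S.T_meas, S.Tinv_meas⟩
  have hμe : MeasurePreserving (e : Θ → Θ) μ μ := hμ
  have hTinvp : MeasurePreserving (e.symm : Θ → Θ) μ μ :=
    MeasurePreserving.symm e hμe
  have hcomp : ∀ f : Θ → ℝ, ∫ θ, f (S.Tinv θ) ∂μ = ∫ θ, f θ ∂μ := by
    intro f
    exact MeasurePreserving.integral_comp' (f := e.symm) hTinvp f
  -- the integral recurrence
  set L : ℕ → ℝ := fun n => ∫ θ, Real.log (S.ψ t M n θ) ∂μ with hL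
  set B : ℕ → ℝ := fun n => ∫ θ, Real.log (S.h (S.ψ t M n θ) / S.ψ t M n θ) ∂μ with hB
  have hLrec : ∀ n, L (n + 1) = (S.γfn μ - t) + B n + L n := by
    intro n
    have hptwise : ∀ θ, Real.log (S.ψ t M (n + 1) θ) =
        (fun θ' => (Real.log (S.g θ') - t) +
          (Real.log (S.h (S.ψ t M n θ') / S.ψ t M n θ') +
            Real.log (S.ψ t M n θ'))) (S.Tinv θ) := by
      intro θ
      obtain ⟨hx1, _⟩ := hψbounds n (S.Tinv θ)
      have hh1 := aux_h_pos S hx1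
      have hg1 := S.g_pos (S.Tinv θ)
      rw [aux_psi_rec]
      simp only [Setting.f]
      rw [Real.log_mul (by positivity) hh1.ne',
        Real.log_mul (Real.exp_ne_zero _) hg1.ne', Real.log_exp,
        Real.log_div hh1.ne' hx1.ne']
      ring
    have he1 : L (n + 1) = ∫ θ, (fun θ' => (Real.log (S.g θ') - t) +
        (Real.log (S.h (S.ψ t M n θ') / S.ψ t M n θ') +
          Real.log (S.ψ t M n θ'))) (S.Tinv θ) ∂μ := by
      rw [hL]
      exact integral_congr_ae (ae_of_all _ hptwise)
    rw [he1, hcomp (fun θ' => (Real.log (S.g θ') - t) +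
        (Real.log (S.h (S.ψ t M n θ') / S.ψ t M n θ') + Real.log (S.ψ t M n θ')))]
    have i1 : Integrable (fun θ => Real.log (S.g θ) - t) μ :=
      hintg.sub (integrable_const t)
    have i2 : Integrable (fun θ => Real.log (S.h (S.ψ t M n θ) / S.ψ t M n θ) +
        Real.log (S.ψ t M n θ)) μ := (hintH n).add (hintlog n)
    rw [integral_add i1 i2, integral_sub hintg (integrable_const t),
      integral_add (hintH n) (hintlog n), integral_const]
    simp only [Setting.γfn, hB, hL, measure_univ, probReal_univ, smul_eq_mul, one_mul]
    ring
  have hLub : ∀ n, L n ≤ Real.log M := by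
    intro n
    have h1 : L n ≤ ∫ _θ, Real.log M ∂μ :=
      integral_mono (hintlog n) (integrable_const _)
        (fun θ => Real.log_le_log (hψbounds n θ).1 (hψbounds n θ).2)
    rwa [integral_const, probReal_univ, one_smul] at h1
  -- a.e. convergence to zero
  have hφmeas : Measurable (S.φ t M) := Measurable.iInf fun n => hψmeas (n + 1)
  have hNset : MeasurableSet (S.Nset t M) := hφmeas (measurableSet_singleton 0)
  have hae0 : ∀ᵐ θ ∂μ, S.φ t M θ = 0 := by
    rw [ae_iff]
    have he2 : {θ | ¬ S.φ t M θ = 0} = (S.Nset t M)ᶜ := rfl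
    rw [he2, measure_compl hNset (measure_ne_top μ _), hN, measure_univ, tsub_self]
  have hBlim : Tendsto B atTop (𝓝 0) := by
    have h0 : (𝓝 (0 : ℝ)) = 𝓝 (∫ _θ, (0 : ℝ) ∂μ) := by rw [integral_zero]
    rw [hB, h0]
    apply tendsto_integral_of_dominated_convergence (fun _ => K)
      (fun n => (hHmeas n).aestronglyMeasurable)
      (integrable_const K)
      (fun n => ae_of_all _ fun θ => by rw [Real.norm_eq_abs]; exact hHbound n θ)
    filter_upwards [hae0] with θ hθ
    have hanti : Antitone fun n => S.ψ t M n θ := aux_psi_antitone S hM hMf θ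
    have hanti1 : Antitone fun n => S.ψ t M (n + 1) θ :=
      fun i j hij => hanti (by omega)
    have hbdd : BddBelow (Set.range fun n => S.ψ t M (n + 1) θ) := by
      refine ⟨0, ?_⟩
      rintro x ⟨n, rfl⟩
      exact (hψbounds (n + 1) θ).1.le
    have h1 : Tendsto (fun n => S.ψ t M (n + 1) θ) atTop
        (𝓝 (⨅ n, S.ψ t M (n + 1) θ)) := tendsto_atTop_ciInf hanti1 hbdd
    have hinf : (⨅ n, S.ψ t M (n + 1) θ) = 0 := hθ
    rw [hinf] at h1
    have h2 : Tendsto (fun n => S.ψ t M n θ) atTop (𝓝 0) :=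
      (tendsto_add_atTop_iff_nat 1).1 h1
    have h3 : Tendsto (fun n => S.ψ t M n θ) atTop (𝓝[>] 0) :=
      tendsto_nhdsWithin_of_tendsto_nhds_of_eventually_within _ h2
        (Eventually.of_forall fun n => (hψbounds n θ).1)
    have h4 : Tendsto (fun n => S.h (S.ψ t M n θ) / S.ψ t M n θ) atTop (𝓝 1) :=
      (aux_ratio_tendsto S).comp h3
    have h5 := (Real.continuousAt_log one_ne_zero).tendsto.comp h4
    rw [Real.log_one] at h5
    exact h5
  -- conclusion
  by_contra hcon
  push_neg at hcon
  have hε2 : 0 < (S.γfn μ - t) / 2 := by linarith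
  have hev : ∀ᶠ n in atTop, -((S.γfn μ - t) / 2) < B n :=
    hBlim.eventually (eventually_gt_nhds (by linarith))
  obtain ⟨N, hNb⟩ := eventually_atTop.1 hev
  have hgrow : ∀ k : ℕ, L N + k * ((S.γfn μ - t) / 2) ≤ L (N + k) := by
    intro k
    induction k with
    | zero => simp
    | succ k ih =>
      have hb := hNb (N + k) (by omega)
      have hrec := hLrec (N + k)
      have he3 : N + (k + 1) = (N + k) + 1 := by ring
      rw [he3]
      push_cast
      linarith
  obtain ⟨k, hk⟩ := exists_nat_gt ((Real.log M - L N) / ((S.γfn μ - t) / 2))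
  have hk2 : Real.log M - L N < k * ((S.γfn μ - t) / 2) := by
    rwa [div_lt_iff₀ hε2] at hk
  have h7 := hgrow k
  have h8 := hLub (N + k)
  linarith
end
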